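/- Let (B, L) be a Banach SNL space with Banach SNL dual (B*, L̃), suppose L(B) = B*, and let A be a norm-closed linear L-positive subspace of B. Then A is maximally L-positive if and only if A⁰ is L̃-negative, and this also holds if and only if A⁰ is maximally L̃-negative. -/

import Mathlib

open Filter Topology NormedSpace Pointwise

set_option maxHeartbeats 1600000

private lemma le_of_eps18 {a b : ℝ} (h : ∀ ε > 0, a ≤ b + ε) : a ≤ b := by
  by_contra hcon
  push_neg at hcon
  have := h ((a - b)/2) (by linarith)
  linarith

lemma ekeland18 {X : Type*} [MetricSpace X] [CompleteSpace X] [Nonempty X]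
    (G : X → ℝ) (hG : Continuous G) (hbd : ∀ x, 0 ≤ G x) {δ : ℝ} (hδ : 0 < δ) :
    ∃ b : X, ∀ x : X, G b - δ * dist x b ≤ G x := by
  classical
  set R : X → X → Prop := fun y z => G y + δ * dist y z ≤ G z with hR
  have hrefl : ∀ x, R x x := fun x => by simp [hR]
  have htrans : ∀ {x y z}, R x y → R y z → R x z := by
    intro x y z h1 h2
    have ht := dist_triangle x y z
    simp only [hR] at *
    nlinarith
  have hstep : ∀ n : ℕ, ∀ z : X, ∃ y : X, R y z ∧
      ∀ w : X, R w z → G y ≤ G w + (1/2 : ℝ)^n := by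
    intro n z
    have hSne : {w : X | R w z}.Nonempty := ⟨z, hrefl z⟩
    have hbdd : BddBelow (G '' {w : X | R w z}) :=
      ⟨0, by rintro _ ⟨w, -, rfl⟩; exact hbd w⟩
    have hlt : sInf (G '' {w : X | R w z}) < sInf (G '' {w : X | R w z}) + (1/2 : ℝ)^n :=
      lt_add_of_pos_right _ (by positivity)
    obtain ⟨_, ⟨y, hyS, rfl⟩, hy⟩ := exists_lt_of_csInf_lt (hSne.image G) hlt
    refine ⟨y, hyS, fun w hw => ?_⟩
    have : sInf (G '' {w : X | R w z}) ≤ G w := csInf_le hbdd ⟨w, hw, rfl⟩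
    linarith
  choose step hstep1 hstep2 using hstep
  let b : ℕ → X := fun n => Nat.rec (Classical.arbitrary X) (fun n z => step n z) n
  have h1 : ∀ n, R (b (n+1)) (b n) := fun n => hstep1 n (b n)
  have h2 : ∀ n w, R w (b n) → G (b (n+1)) ≤ G w + (1/2 : ℝ)^n := fun n => hstep2 n (b n)
  have hchain : ∀ m n, n ≤ m → R (b m) (b n) := by
    intro m
    induction m with
    | zero => intro n hn; rw [Nat.le_zero.mp hn]; exact hrefl _
    | succ k ih =>
        intro n hn
        rcases eq_or_lt_of_le hn with h | h
        · rw [← h]; exact hrefl _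
        · exact htrans (h1 k) (ih n (Nat.lt_succ_iff.mp h))
  have hdist : ∀ n, dist (b n) (b (n+1)) ≤ (G (b n) - G (b (n+1)))/δ := by
    intro n
    have := h1 n
    simp only [hR] at this
    rw [dist_comm]
    rw [le_div_iff₀ hδ]
    nlinarith [dist_nonneg (x := b (n+1)) (y := b n)]
  have hsum : Summable fun n => dist (b n) (b (n+1)) := by
    apply summable_of_sum_range_le (c := G (b 0)/δ) (fun n => dist_nonneg)
    intro n
    calc ∑ i ∈ Finset.range n, dist (b i) (b (i+1))
        ≤ ∑ i ∈ Finset.range n, (G (b i) - G (b (i+1)))/δ :=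
          Finset.sum_le_sum fun i _ => hdist i
      _ = (G (b 0) - G (b n))/δ := by
          rw [← Finset.sum_div, Finset.sum_range_sub' (fun i => G (b i))]
      _ ≤ G (b 0)/δ := by
          have h0 := hbd (b n)
          gcongr
          linarith
  obtain ⟨β, hβ⟩ := cauchySeq_tendsto_of_complete (cauchySeq_of_summable_dist hsum)
  have hlim : ∀ n, R β (b n) := by
    intro n
    have hev : ∀ᶠ m in atTop, G (b m) + δ * dist (b m) (b n) ≤ G (b n) :=
      eventually_atTop.mpr ⟨n, fun m hm => hchain m n hm⟩
    have htend : Tendsto (fun m => G (b m) + δ * dist (b m) (b n)) atTop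
        (𝓝 (G β + δ * dist β (b n))) :=
      (((hG.tendsto β).comp hβ).add ((tendsto_const_nhds.mul (hβ.dist tendsto_const_nhds))))
    exact le_of_tendsto htend hev
  refine ⟨β, fun x => ?_⟩
  by_contra hcon
  push_neg at hcon
  have hword : R x β := by simp only [hR]; nlinarith [dist_nonneg (x := x) (y := β)]
  have hGle : G β ≤ G x := by
    apply le_of_eps18
    intro ε hε
    obtain ⟨n, hn⟩ := exists_pow_lt_of_lt_one hε (by norm_num : (1/2 : ℝ) < 1)
    have hxn : R x (b n) := htrans hword (hlim n)
    have ha := h2 n x hxn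
    have hb2 : G β ≤ G (b (n+1)) := by
      have := hlim (n+1)
      simp only [hR] at this
      nlinarith [dist_nonneg (x := β) (y := b (n+1))]
    linarith
  nlinarith [dist_nonneg (x := x) (y := β)]

lemma core18 {B : Type*} [NormedAddCommGroup B] [NormedSpace ℝ B] [CompleteSpace B]
    (L : B →L[ℝ] StrongDual ℝ B) (hiso : ∀ b, ‖L b‖ = ‖b‖)
    (hsym : ∀ b c : B, L c b = L b c) (hsurj : Function.Surjective L)
    (A : Submodule ℝ B) (hclosed : IsClosed (A : Set B))
    (hposL : ∀ a ∈ A, 0 ≤ L a a)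
    (hneg : ∀ d : B, (∀ a ∈ A, L d a = 0) → L d d ≤ 0)
    (c : B) (hc : ∀ a ∈ A, 0 ≤ L (c - a) (c - a)) : c ∈ A := by
  classical
  have expand : ∀ x y : B, L (x + y) (x + y) = L x x + 2 * L x y + L y y := by
    intro x y
    have hs := hsym x y
    simp only [map_add, ContinuousLinearMap.add_apply]
    linarith
  have key : ∀ δ : ℝ, 0 < δ → ∃ b ∈ A, ‖c - b‖ ≤ 3 * δ := by
    intro δ hδ
    haveI : Nonempty A := ⟨0⟩
    haveI : CompleteSpace A := hclosed.completeSpace_coe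
    set G : A → ℝ := fun a => L (c - ↑a) (c - ↑a) + ‖c - ↑a‖^2 with hGdef
    have hGcont : Continuous G := by
      have h1 : Continuous fun a : A => (c - ↑a) := continuous_const.sub continuous_subtype_val
      have h2 : Continuous fun x : B => L x x :=
        isBoundedBilinearMap_apply.continuous.comp (L.continuous.prodMk continuous_id)
      exact (h2.comp h1).add ((h1.norm).pow 2)
    have hGnonneg : ∀ a : A, 0 ≤ G a := fun a => add_nonneg (hc _ a.2) (sq_nonneg _)
    obtain ⟨b, hb⟩ := ekeland18 G hGcont hGnonneg hδ
    set d := c - (↑b : B) with hd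
    have hLdd : 0 ≤ L d d := hc _ b.2
    set Q : B → ℝ → ℝ := fun x t => (‖d + t • x‖^2 - ‖d‖^2)/t with hQdef
    -- variational inequality
    have starQ : ∀ a ∈ A, ∀ t : ℝ, 0 < t →
        2 * L d a ≤ t * L a a + Q (-a) t + δ * ‖a‖ := by
      intro a ha t ht
      have hmem : ((↑b : B) + t • a) ∈ A := A.add_mem b.2 (A.smul_mem t ha)
      have h := hb ⟨(↑b : B) + t • a, hmem⟩
      have hdist : dist (⟨(↑b : B) + t • a, hmem⟩ : A) b = t * ‖a‖ := by
        rw [Subtype.dist_eq, dist_eq_norm]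
        simp only [add_sub_cancel_left, norm_smul, Real.norm_eq_abs, abs_of_pos ht]
      have hsub : c - ((↑b : B) + t • a) = d + t • (-a) := by
        rw [hd, smul_neg]; abel
      have hLdta : L d (t • (-a)) = -(t * L d a) := by
        rw [map_smul, map_neg, smul_eq_mul]; ring
      have hLtata : L (t • (-a)) (t • (-a)) = t^2 * L a a := by
        rw [map_smul, map_neg]
        simp only [ContinuousLinearMap.smul_apply, ContinuousLinearMap.neg_apply,
          map_smul, map_neg, smul_eq_mul]
        ring
      have hexp : L (d + t • (-a)) (d + t • (-a)) = L d d - 2*t*(L d a) + t^2 * (L a a) := by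
        rw [expand, hLdta, hLtata]; ring
      rw [hGdef] at h
      simp only [hdist, hsub] at h
      have h3 : 2*t*(L d a) ≤ t^2 * (L a a) + (‖d + t • (-a)‖^2 - ‖d‖^2) + δ*(t*‖a‖) := by
        have hdd : L d d + ‖d‖^2 - δ * (t * ‖a‖) ≤
            L (d + t • (-a)) (d + t • (-a)) + ‖d + t • (-a)‖^2 := by
          convert h using 2 <;> rw [hd]
        rw [hexp] at hdd
        linarith
      have hgoal : 2 * L d a - t * L a a - δ * ‖a‖ ≤ Q (-a) t := by
        rw [hQdef]
        rw [le_div_iff₀ ht]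
        nlinarith [h3]
      linarith
    -- monotonicity of difference quotients
    have hQmono : ∀ x : B, ∀ t s : ℝ, 0 < t → t ≤ s → Q x t ≤ Q x s := by
      intro x t s ht hts
      have hs : 0 < s := lt_of_lt_of_le ht hts
      rw [hQdef]
      rw [div_le_div_iff₀ ht hs]
      have hid : s • (d + t • x) = (s - t) • d + t • (d + s • x) := by module
      have hconv : ‖d + t • x‖ * s ≤ (s - t) * ‖d‖ + t * ‖d + s • x‖ := by
        calc ‖d + t • x‖ * s = ‖s • (d + t • x)‖ := by
              rw [norm_smul, Real.norm_eq_abs, abs_of_pos hs]; ring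
          _ = ‖(s - t) • d + t • (d + s • x)‖ := by rw [hid]
          _ ≤ ‖(s-t) • d‖ + ‖t • (d + s • x)‖ := norm_add_le _ _
          _ = (s - t) * ‖d‖ + t * ‖d + s • x‖ := by
              rw [norm_smul, norm_smul, Real.norm_eq_abs, Real.norm_eq_abs,
                abs_of_nonneg (by linarith), abs_of_pos ht]
      have hsq : (‖d + t • x‖ * s)^2 ≤ ((s - t) * ‖d‖ + t * ‖d + s • x‖)^2 :=
        pow_le_pow_left₀ (mul_nonneg (norm_nonneg _) hs.le) hconv 2
      have hh : 0 ≤ t * (s - t) * (‖d‖ - ‖d + s • x‖)^2 :=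
        mul_nonneg (mul_nonneg ht.le (by linarith)) (sq_nonneg _)
      have hX : s * ((‖d + t • x‖^2 - ‖d‖^2)*s - (‖d + s • x‖^2 - ‖d‖^2)*t) ≤ 0 := by
        nlinarith [hsq, hh]
      have hX2 := le_of_mul_le_mul_left (by linarith :
        s * ((‖d + t • x‖^2 - ‖d‖^2)*s - (‖d + s • x‖^2 - ‖d‖^2)*t) ≤ s * 0) hs
      linarith
    have hQupper : ∀ (x : B) (t : ℝ), 0 < t → Q x t ≤ 2*‖d‖*‖x‖ + t*‖x‖^2 := by
      intro x t ht
      rw [hQdef, div_le_iff₀ ht]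
      have hu : ‖d + t • x‖ ≤ ‖d‖ + t * ‖x‖ := by
        calc ‖d + t • x‖ ≤ ‖d‖ + ‖t • x‖ := norm_add_le _ _
          _ = ‖d‖ + t * ‖x‖ := by rw [norm_smul, Real.norm_eq_abs, abs_of_pos ht]
      have hsq := pow_le_pow_left₀ (norm_nonneg (d + t • x)) hu 2
      nlinarith [hsq, norm_nonneg d, norm_nonneg x, ht]
    have hQlow1 : ∀ (x : B) (t : ℝ), 0 < t → t ≤ 1 → -(2*‖d‖*‖x‖ + 3*‖x‖^2) ≤ Q x t := by
      intro x t ht ht1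
      rw [hQdef, le_div_iff₀ ht]
      have hv : ‖d‖ ≤ ‖d + t • x‖ + t * ‖x‖ := by
        have h0 : d = (d + t • x) - t • x := by abel
        calc ‖d‖ = ‖(d + t • x) - t • x‖ := by rw [← h0]
          _ ≤ ‖d + t • x‖ + ‖t • x‖ := norm_sub_le _ _
          _ = ‖d + t • x‖ + t * ‖x‖ := by rw [norm_smul, Real.norm_eq_abs, abs_of_pos ht]
      have hu : ‖d + t • x‖ ≤ ‖d‖ + t * ‖x‖ := by
        calc ‖d + t • x‖ ≤ ‖d‖ + ‖t • x‖ := norm_add_le _ _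
          _ = ‖d‖ + t * ‖x‖ := by rw [norm_smul, Real.norm_eq_abs, abs_of_pos ht]
      have hsq := pow_le_pow_left₀ (norm_nonneg d) hv 2
      nlinarith [hsq, mul_le_mul_of_nonneg_left hu (by positivity : (0:ℝ) ≤ 2*t*‖x‖),
        mul_le_mul_of_nonneg_left ht1 (by positivity : (0:ℝ) ≤ t*‖x‖^2),
        norm_nonneg x, norm_nonneg d, norm_nonneg (d + t • x), ht]
    have hQlower : ∀ (x : B) (t : ℝ), 0 < t → -(2*‖d‖*‖x‖+3*‖x‖^2) ≤ Q x t := by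
      intro x t ht
      rcases le_or_gt t 1 with h|h
      · exact hQlow1 x t ht h
      · exact (hQlow1 x 1 one_pos le_rfl).trans (hQmono x 1 t one_pos h.le)
    set P0 : B → ℝ := fun x => sInf (Q x '' Set.Ioi 0) with hP0def
    have hP0ne : ∀ x : B, (Q x '' Set.Ioi 0).Nonempty :=
      fun x => ⟨Q x 1, 1, by norm_num, rfl⟩
    have hP0bdd : ∀ x : B, BddBelow (Q x '' Set.Ioi 0) := by
      intro x
      refine ⟨-(2*‖d‖*‖x‖+3*‖x‖^2), ?_⟩
      rintro _ ⟨t, ht, rfl⟩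
      exact hQlower x t ht
    have hP0le : ∀ (x : B) (t : ℝ), 0 < t → P0 x ≤ Q x t :=
      fun x t ht => csInf_le (hP0bdd x) ⟨t, ht, rfl⟩
    have hleP0 : ∀ (x : B) (r : ℝ), (∀ t : ℝ, 0 < t → r ≤ Q x t) → r ≤ P0 x := by
      intro x r hr
      apply le_csInf (hP0ne x)
      rintro _ ⟨t, ht, rfl⟩
      exact hr t ht
    have hQsmul : ∀ (x : B) (k t : ℝ), 0 < k → 0 < t → Q (k • x) t = k * Q x (k*t) := by
      intro x k t hk ht
      simp only [hQdef, smul_smul]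
      rw [mul_comm t k]
      field_simp
    have hP0smul : ∀ (k : ℝ), 0 < k → ∀ x : B, P0 (k • x) = k * P0 x := by
      intro k hk x
      have himg : Q (k • x) '' Set.Ioi 0 = k • (Q x '' Set.Ioi 0) := by
        apply Set.Subset.antisymm
        · rintro r ⟨t, ht, rfl⟩
          rw [Set.mem_smul_set]
          have ht' : (0:ℝ) < t := ht
          refine ⟨Q x (k*t), ⟨k*t, mul_pos hk ht', rfl⟩, ?_⟩
          rw [smul_eq_mul, ← hQsmul x k t hk ht']
        · rintro r hr
          rw [Set.mem_smul_set] at hr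
          obtain ⟨_, ⟨t, ht, rfl⟩, rfl⟩ := hr
          have ht' : (0:ℝ) < t := ht
          refine ⟨t/k, Set.mem_Ioi.mpr (div_pos ht' hk), ?_⟩
          rw [hQsmul x k (t/k) hk (div_pos ht' hk), smul_eq_mul]
          congr 1
          field_simp
      simp only [hP0def]
      rw [himg, Real.sInf_smul_of_nonneg hk.le, smul_eq_mul]
    have hQadd : ∀ (x y : B) (t : ℝ), 0 < t → Q (x + y) t ≤ Q x (2*t) + Q y (2*t) := by
      intro x y t ht
      have hmid : (2:ℝ) • (d + t • (x + y)) = (d + (2*t) • x) + (d + (2*t) • y) := by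
        module
      have hnorm : 2 * ‖d + t • (x+y)‖ ≤ ‖d + (2*t) • x‖ + ‖d + (2*t) • y‖ := by
        calc 2 * ‖d + t • (x+y)‖ = ‖(2:ℝ) • (d + t • (x + y))‖ := by
              rw [norm_smul]; simp
          _ = ‖(d + (2*t) • x) + (d + (2*t) • y)‖ := by rw [hmid]
          _ ≤ _ := norm_add_le _ _
      have hkey2 : 2*‖d + t • (x+y)‖^2 ≤ ‖d + (2*t) • x‖^2 + ‖d + (2*t) • y‖^2 := by
        have hsq := pow_le_pow_left₀ (by positivity) hnorm 2
        nlinarith [hsq, sq_nonneg (‖d + (2*t) • x‖ - ‖d + (2*t) • y‖)]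
      rw [hQdef]
      simp only []
      rw [← add_div, div_le_div_iff₀ ht (by positivity)]
      nlinarith [mul_le_mul_of_nonneg_left hkey2 ht.le]
    -- Hahn-Banach extension
    set N : B → ℝ := fun x => P0 x + δ * ‖x‖ with hNdef
    have hNhom : ∀ (k : ℝ), 0 < k → ∀ x : B, N (k • x) = k * N x := by
      intro k hk x
      rw [hNdef]
      simp only []
      rw [hP0smul k hk, norm_smul, Real.norm_eq_abs, abs_of_pos hk]
      ring
    have hNadd : ∀ x y : B, N (x + y) ≤ N x + N y := by
      intro x y
      have hp : P0 (x + y) ≤ P0 x + P0 y := by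
        apply le_of_eps18
        intro ε hε
        obtain ⟨_, ⟨t₁, ht₁, rfl⟩, hlt₁⟩ := exists_lt_of_csInf_lt (hP0ne x)
          (lt_add_of_pos_right (P0 x) (by linarith : (0:ℝ) < ε/2))
        obtain ⟨_, ⟨t₂, ht₂, rfl⟩, hlt₂⟩ := exists_lt_of_csInf_lt (hP0ne y)
          (lt_add_of_pos_right (P0 y) (by linarith : (0:ℝ) < ε/2))
        have ht₁' : (0:ℝ) < t₁ := ht₁
        have ht₂' : (0:ℝ) < t₂ := ht₂
        set s := min t₁ t₂ with hs
        have hs0 : 0 < s := lt_min ht₁' ht₂'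
        have h1 : P0 (x + y) ≤ Q (x+y) (s/2) := hP0le _ _ (by positivity)
        have h2 : Q (x+y) (s/2) ≤ Q x s + Q y s := by
          have := hQadd x y (s/2) (by positivity)
          have h2s : 2 * (s/2) = s := by ring
          rwa [h2s] at this
        have h3 : Q x s ≤ Q x t₁ := hQmono x s t₁ hs0 (min_le_left _ _)
        have h4 : Q y s ≤ Q y t₂ := hQmono y s t₂ hs0 (min_le_right _ _)
        linarith
      have hn : δ * ‖x + y‖ ≤ δ * ‖x‖ + δ * ‖y‖ := by
        rw [← mul_add]
        exact mul_le_mul_of_nonneg_left (norm_add_le x y) hδ.le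
      rw [hNdef]; simp only []; linarith
    have hkey : ∀ a ∈ A, 2 * L d a ≤ P0 (-a) + δ * ‖a‖ := by
      intro a ha
      have h1 : ∀ s : ℝ, 0 < s → 2 * L d a - δ*‖a‖ ≤ Q (-a) s := by
        intro s hs
        apply le_of_eps18
        intro ε hε
        have hLaa : 0 ≤ L a a := hposL a ha
        set t := min s (ε/(L a a + 1)) with htdef
        have ht : 0 < t := lt_min hs (by positivity)
        have h2 := starQ a ha t ht
        have h3 : Q (-a) t ≤ Q (-a) s := hQmono (-a) t s ht (min_le_left _ _)
        have h4 : t * L a a ≤ ε := by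
          have h5 : t ≤ ε/(L a a + 1) := min_le_right _ _
          have h6 : t * L a a ≤ (ε/(L a a + 1)) * L a a :=
            mul_le_mul_of_nonneg_right h5 hLaa
          have h7 : (ε/(L a a + 1)) * L a a ≤ ε := by
            rw [div_mul_eq_mul_div, div_le_iff₀ (by linarith)]
            nlinarith
          linarith
        linarith
      have h8 : 2 * L d a - δ*‖a‖ ≤ P0 (-a) := hleP0 _ _ h1
      linarith
    set fl : A →ₗ[ℝ] ℝ :=
      { toFun := fun a => -2 * L d ↑a
        map_add' := by
          intro x y
          simp only [Submodule.coe_add, map_add]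
          ring
        map_smul' := by
          intro k x
          simp only [Submodule.coe_smul, map_smul, smul_eq_mul, RingHom.id_apply]
          ring } with hfldef
    obtain ⟨g, hg_eq, hg_le⟩ := exists_extension_of_le_sublinear ⟨A, fl⟩ N
      (fun k hk x => hNhom k hk x) hNadd
      (by
        rintro ⟨x, hx⟩
        have h9 := hkey (-x) (A.neg_mem hx)
        simp only [map_neg, neg_neg, norm_neg] at h9
        rw [hNdef]
        simp only [hfldef, LinearPMap.mk_apply, LinearMap.coe_mk, AddHom.coe_mk]
        linarith)
    have hg_bound : ∀ x : B, g x ≤ (2*‖d‖ + δ)*‖x‖ := by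
      intro x
      apply le_of_eps18
      intro ε hε
      set t := ε/(‖x‖^2+1) with htdef
      have ht : 0 < t := by positivity
      have h1 := hg_le x
      have h2 : P0 x ≤ Q x t := hP0le x t ht
      have h3 := hQupper x t ht
      have h4 : t * ‖x‖^2 ≤ ε := by
        rw [htdef, div_mul_eq_mul_div, div_le_iff₀ (by positivity)]
        nlinarith [sq_nonneg ‖x‖]
      rw [hNdef] at h1
      simp only [] at h1
      nlinarith
    have habs : ∀ x : B, |g x| ≤ (2*‖d‖+δ)*‖x‖ := by
      intro x
      rw [abs_le]
      constructor
      · have := hg_bound (-x)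
        rw [map_neg, norm_neg] at this
        linarith
      · exact hg_bound x
    set j : B →L[ℝ] ℝ := LinearMap.mkContinuous g (2*‖d‖+δ)
      (fun x => by rw [Real.norm_eq_abs]; exact habs x) with hjdef
    have hjnorm : ‖j‖ ≤ 2*‖d‖+δ :=
      LinearMap.mkContinuous_norm_le g (by positivity) _
    have hjapp : ∀ x : B, j x = g x := fun x => rfl
    have hgd : 2*‖d‖^2 - δ*‖d‖ ≤ g d := by
      have h1 : ∀ t : ℝ, 0 < t → t < 1 → g (-d) ≤ (t - 2)*‖d‖^2 + δ*‖d‖ := by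
        intro t ht ht1
        have h2 := hg_le (-d)
        have hQneg : Q (-d) t = (t - 2)*‖d‖^2 := by
          rw [hQdef]
          simp only []
          have hdd : d + t • (-d) = (1 - t) • d := by module
          rw [hdd, norm_smul, Real.norm_eq_abs, abs_of_pos (by linarith), mul_pow]
          field_simp
          ring
        have h3 : P0 (-d) ≤ Q (-d) t := hP0le (-d) t ht
        rw [hNdef] at h2
        simp only [norm_neg] at h2
        rw [hQneg] at h3
        linarith
      have h2 : g (-d) ≤ -2*‖d‖^2 + δ*‖d‖ := by
        apply le_of_eps18
        intro ε hε
        set t := min (1/2 : ℝ) (ε/(‖d‖^2+1)) with htdef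
        have ht : 0 < t := lt_min (by norm_num) (by positivity)
        have ht1 : t < 1 := lt_of_le_of_lt (min_le_left _ _) (by norm_num)
        have h3 := h1 t ht ht1
        have h4 : t * ‖d‖^2 ≤ ε := by
          have h5 : t ≤ ε/(‖d‖^2+1) := min_le_right _ _
          have h6 : t * ‖d‖^2 ≤ (ε/(‖d‖^2+1)) * ‖d‖^2 :=
            mul_le_mul_of_nonneg_right h5 (sq_nonneg _)
          have h7 : (ε/(‖d‖^2+1)) * ‖d‖^2 ≤ ε := by
            rw [div_mul_eq_mul_div, div_le_iff₀ (by positivity)]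
            nlinarith [sq_nonneg ‖d‖]
          linarith
        nlinarith
      have h3 : g (-d) = - g d := by rw [map_neg]
      linarith
    obtain ⟨e, he⟩ := hsurj j
    have henorm : ‖e‖ ≤ 2*‖d‖+δ := by rw [← hiso e, he]; exact hjnorm
    have hLee : -((2*‖d‖+δ)^2) ≤ L e e := by
      have h1 : |L e e| ≤ ‖L e‖ * ‖e‖ := by
        have := (L e).le_opNorm e
        rwa [Real.norm_eq_abs] at this
      have h2 : ‖L e‖ = ‖e‖ := hiso e
      have h3 := abs_le.mp h1
      nlinarith [norm_nonneg e, norm_nonneg d, hδ]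
    have hjA : ∀ a ∈ A, j a = -2 * L d a := by
      intro a ha
      rw [hjapp]
      have := hg_eq ⟨a, ha⟩
      simpa [hfldef] using this
    have hwperp : ∀ a ∈ A, L (e + (2:ℝ) • d) a = 0 := by
      intro a ha
      have h1 : L e a = j a := by rw [he]
      have h2 := hjA a ha
      simp only [map_add, map_smul, ContinuousLinearMap.add_apply,
        ContinuousLinearMap.smul_apply, smul_eq_mul]
      rw [h1, h2]
      ring
    have hww := hneg _ hwperp
    have hLed : L e d = g d := by
      have h1 : L e d = j d := by rw [he]
      rw [h1, hjapp]
    have hexpand : L (e + (2:ℝ) • d) (e + (2:ℝ) • d) = L e e + 4 * L e d + 4 * L d d := by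
      rw [expand]
      have h1 : L e ((2:ℝ) • d) = 2 * L e d := by rw [map_smul, smul_eq_mul]
      have h2 : L ((2:ℝ) • d) ((2:ℝ) • d) = 4 * L d d := by
        rw [map_smul]
        simp only [ContinuousLinearMap.smul_apply, map_smul, smul_eq_mul]
        ring
      rw [h1, h2]
      ring
    rw [hexpand] at hww
    have hfinal : 4*‖d‖^2 ≤ 8*δ*‖d‖ + δ^2 := by nlinarith [hgd, hLee, hLdd, hLed]
    have hd3 : ‖d‖ ≤ 3*δ := by nlinarith [norm_nonneg d, hδ]
    exact ⟨↑b, b.2, by rw [← hd]; exact hd3⟩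
  have hcl : c ∈ closure (A : Set B) := by
    rw [Metric.mem_closure_iff]
    intro ε hε
    obtain ⟨b, hbA, hb3⟩ := key (ε/4) (by linarith)
    exact ⟨b, hbA, by rw [dist_eq_norm]; linarith⟩
  rwa [hclosed.closure_eq] at hcl

lemma sep18 {B : Type*} [NormedAddCommGroup B] [NormedSpace ℝ B]
    (A : Submodule ℝ B) (hclosed : IsClosed (A : Set B)) {x : B} (hx : x ∉ A) :
    ∃ p : B →L[ℝ] ℝ, (∀ a ∈ A, p a = 0) ∧ p x ≠ 0 := by
  obtain ⟨f, u, hfa, hfx⟩ :=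
    geometric_hahn_banach_closed_point (A.convex) hclosed hx
  have h0 : (0:ℝ) < u := by
    have := hfa 0 A.zero_mem
    simpa using this
  refine ⟨f, ?_, ?_⟩
  · intro a ha
    by_contra hfa0
    have hmem : ((u+1)/(f a)) • a ∈ A := A.smul_mem _ ha
    have h1 := hfa _ hmem
    rw [map_smul, smul_eq_mul, div_mul_cancel₀ _ hfa0] at h1
    linarith
  · intro h
    rw [h] at hfx
    linarith



lemma ltbound18 {B : Type*} [NormedAddCommGroup B] [NormedSpace ℝ B] (Lt : StrongDual ℝ B →L[ℝ] StrongDual ℝ (StrongDual ℝ B)) (x : StrongDual ℝ B) : ‖Lt x‖ ≤ @Norm.norm _ (@ContinuousLinearMap.hasOpNorm ℝ ℝ (StrongDual ℝ B) (StrongDual ℝ (StrongDual ℝ B)) _ _ _ _ _ _ (RingHom.id ℝ)) Lt * ‖x‖ := by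
  have := @ContinuousLinearMap.le_opNorm ℝ ℝ (StrongDual ℝ B) (StrongDual ℝ (StrongDual ℝ B)) _ _ _ _ _ _ (RingHom.id ℝ) _ Lt x
  exact this

noncomputable def qL {B : Type*} [NormedAddCommGroup B] [NormedSpace ℝ B]
    (L : B →L[ℝ] StrongDual ℝ B) (b : B) : ℝ := (1 / 2) * L b b

def LPositive {B : Type*} [NormedAddCommGroup B] [NormedSpace ℝ B]
    (L : B →L[ℝ] StrongDual ℝ B) (A : Set B) : Prop :=
  A.Nonempty ∧ ∀ b ∈ A, ∀ c ∈ A, 0 ≤ qL L (b - c)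

def MaxLPositive {B : Type*} [NormedAddCommGroup B] [NormedSpace ℝ B]
    (L : B →L[ℝ] StrongDual ℝ B) (A : Set B) : Prop :=
  LPositive L A ∧ ∀ A' : Set B, LPositive L A' → A ⊆ A' → A' = A

def LNegative {B : Type*} [NormedAddCommGroup B] [NormedSpace ℝ B]
    (L : B →L[ℝ] StrongDual ℝ B) (A : Set B) : Prop :=
  A.Nonempty ∧ ∀ b ∈ A, ∀ c ∈ A, qL L (b - c) ≤ 0

def MaxLNegative {B : Type*} [NormedAddCommGroup B] [NormedSpace ℝ B]
    (L : B →L[ℝ] StrongDual ℝ B) (A : Set B) : Prop :=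
  LNegative L A ∧ ∀ A' : Set B, LNegative L A' → A ⊆ A' → A' = A

theorem stmt18 {B : Type*} [NormedAddCommGroup B] [NormedSpace ℝ B] [CompleteSpace B]
    [Nontrivial B]
    (L : B →L[ℝ] StrongDual ℝ B) (hL : ‖L‖ ≤ 1)
    (hsym : ∀ b c : B, L c b = L b c)
    (Lt : StrongDual ℝ B →L[ℝ] StrongDual ℝ (StrongDual ℝ B)) (hLt : @Norm.norm _ (@ContinuousLinearMap.hasOpNorm ℝ ℝ (StrongDual ℝ B) (StrongDual ℝ (StrongDual ℝ B)) _ _ _ _ _ _ (RingHom.id ℝ)) Lt ≤ 1)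
    (hsymt : ∀ p q : StrongDual ℝ B, Lt q p = Lt p q)
    (hdual : ∀ b : B, Lt (L b) = inclusionInDoubleDual ℝ B b)
    (hsurj : Function.Surjective L)
    (A : Subspace ℝ B) (hclosed : IsClosed (A : Set B))
    (hpos : ∀ a ∈ A, 0 ≤ qL L a) :
    (MaxLPositive L (A : Set B) ↔
      LNegative Lt {b' : StrongDual ℝ B | ∀ a ∈ A, b' a = 0}) ∧
    (MaxLPositive L (A : Set B) ↔
      MaxLNegative Lt {b' : StrongDual ℝ B | ∀ a ∈ A, b' a = 0}) := by
  classical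
  set Ann : Set (StrongDual ℝ B) := {b' : StrongDual ℝ B | ∀ a ∈ A, b' a = 0} with hAnn
  -- L is an isometry
  have hiso : ∀ b : B, ‖L b‖ = ‖b‖ := by
    intro b
    refine le_antisymm ?_ ?_
    · calc ‖L b‖ ≤ ‖L‖ * ‖b‖ := L.le_opNorm b
        _ ≤ 1 * ‖b‖ := mul_le_mul_of_nonneg_right hL (norm_nonneg b)
        _ = ‖b‖ := one_mul _
    · calc ‖b‖ = ‖inclusionInDoubleDual ℝ B b‖ :=
          ((inclusionInDoubleDualLi ℝ (E := B)).norm_map b).symm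
        _ = ‖Lt (L b)‖ := by rw [hdual b]
        _ ≤ @Norm.norm _ (@ContinuousLinearMap.hasOpNorm ℝ ℝ (StrongDual ℝ B) (StrongDual ℝ (StrongDual ℝ B)) _ _ _ _ _ _ (RingHom.id ℝ)) Lt * ‖L b‖ := ltbound18 Lt (L b)
        _ ≤ 1 * ‖L b‖ := mul_le_mul_of_nonneg_right hLt (norm_nonneg _)
        _ = ‖L b‖ := one_mul _
  have hposL : ∀ a ∈ A, 0 ≤ L a a := by
    intro a ha
    have := hpos a ha
    unfold qL at this
    linarith
  -- quadratic form transport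
  have hLtq : ∀ x : B, Lt (L x) (L x) = L x x := by
    intro x
    rw [hdual x]
    exact dual_def ℝ B x (L x)
  have hqt : ∀ x : B, qL Lt (L x) = qL L x := by
    intro x
    unfold qL
    rw [hLtq]
  -- the perp subspace C
  set C : Submodule ℝ B :=
    { carrier := {b : B | ∀ a ∈ A, L b a = 0}
      add_mem' := by
        intro x y hx hy a ha
        rw [map_add, ContinuousLinearMap.add_apply, hx a ha, hy a ha, add_zero]
      zero_mem' := by
        intro a ha
        simp
      smul_mem' := by
        intro k x hx a ha
        rw [map_smul]
        simp [hx a ha] } with hCdef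
  have hmemC : ∀ x : B, x ∈ C ↔ ∀ a ∈ A, L x a = 0 := fun x => Iff.rfl
  have hmemAnn : ∀ x : B, L x ∈ Ann ↔ x ∈ C := fun x => Iff.rfl
  have hCclosed : IsClosed (C : Set B) := by
    have hset : (C : Set B) = ⋂ a ∈ (A : Set B), {b : B | L.flip a b = 0} := by
      ext x
      simp only [Set.mem_iInter, Set.mem_setOf_eq, ContinuousLinearMap.flip_apply]
      exact hmemC x
    rw [hset]
    exact isClosed_biInter fun a _ => isClosed_eq (L.flip a).continuous continuous_const
  have h0Ann : (0 : StrongDual ℝ B) ∈ Ann := by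
    intro a _
    rfl
  -- negativity of Ann gives q ≤ 0 on C
  have hnegC : LNegative Lt Ann → ∀ x ∈ C, L x x ≤ 0 := by
    intro hn x hx
    have h1 := hn.2 (L x) ((hmemAnn x).mpr hx) 0 h0Ann
    rw [sub_zero] at h1
    have := hqt x
    unfold qL at h1 this
    linarith [this ▸ h1]
  -- bipolar
  have hCperp : ∀ x : B, (∀ y ∈ C, L x y = 0) → x ∈ A := by
    intro x hx
    by_contra hxA
    obtain ⟨p, hpA, hpx⟩ := sep18 A hclosed hxA
    obtain ⟨y, hy⟩ := hsurj p
    have hyC : y ∈ C := by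
      rw [hmemC]
      intro a ha
      rw [hy]
      exact hpA a ha
    have h1 := hx y hyC
    rw [hsym y x] at h1
    rw [← hy] at hpx
    exact hpx h1
  -- expansion helper
  have expand : ∀ x y : B, L (x - y) (x - y) = L x x - 2 * L x y + L y y := by
    intro x y
    have hs := hsym x y
    simp only [map_sub, ContinuousLinearMap.sub_apply]
    linarith
  ----------------------------------------------------------------
  -- P1 : MaxLPositive → LNegative Ann
  have P1 : MaxLPositive L (A : Set B) → LNegative Lt Ann := by
    intro hmax
    refine ⟨⟨0, h0Ann⟩, ?_⟩
    intro p hp r hr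
    obtain ⟨x, rfl⟩ := hsurj p
    obtain ⟨y, rfl⟩ := hsurj r
    have hxC : x ∈ C := (hmemAnn x).mp hp
    have hyC : y ∈ C := (hmemAnn y).mp hr
    have hdC : x - y ∈ C := C.sub_mem hxC hyC
    set e := x - y with he
    have hsub : L x - L y = L e := (map_sub L x y).symm
    rw [hsub, hqt e]
    unfold qL
    by_contra hcon
    push_neg at hcon
    have hLee : 0 < L e e := by linarith
    -- A ∪ {e} is positive
    have hpose : LPositive L (insert e (A : Set B)) := by
      refine ⟨⟨e, Set.mem_insert _ _⟩, ?_⟩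
      intro v hv w hw
      rcases Set.mem_insert_iff.mp hv with hv | hv <;>
        rcases Set.mem_insert_iff.mp hw with hw | hw
      · rw [hv, hw]
        simp [qL]
      · rw [hv]
        unfold qL
        rw [expand]
        have h2 : L e w = 0 := (hmemC e).mp hdC w hw
        have h3 := hposL w hw
        linarith
      · rw [hw]
        unfold qL
        rw [expand]
        have h2 : L v e = 0 := by
          rw [hsym e v]
          exact (hmemC e).mp hdC v hv
        have h3 := hposL v hv
        linarith
      · unfold qL
        rw [expand]
        have h2 := hposL (v - w) (A.sub_mem hv hw)
        rw [expand] at h2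
        linarith
    have heq := hmax.2 _ hpose (Set.subset_insert _ _)
    have heA : e ∈ A := by
      have h5 : e ∈ (A : Set B) := heq ▸ Set.mem_insert e (A : Set B)
      exact h5
    have : L e e = 0 := (hmemC e).mp hdC e heA
    linarith
  ----------------------------------------------------------------
  -- P2 : LNegative Ann → MaxLPositive
  have P2 : LNegative Lt Ann → MaxLPositive L (A : Set B) := by
    intro hn
    have hneg : ∀ d : B, (∀ a ∈ A, L d a = 0) → L d d ≤ 0 :=
      fun d hd => hnegC hn d ((hmemC d).mpr hd)
    constructor
    · refine ⟨⟨0, A.zero_mem⟩, ?_⟩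
      intro v hv w hw
      exact hpos _ (A.sub_mem hv hw)
    · intro A' hA' hsub
      apply Set.Subset.antisymm _ hsub
      intro x hx
      have hxA : x ∈ A := by
        apply core18 L hiso hsym hsurj A hclosed hposL hneg
        intro a ha
        have := hA'.2 x hx a (hsub ha)
        unfold qL at this
        linarith
      exact hxA
  ----------------------------------------------------------------
  -- P3 : LNegative Ann → MaxLNegative Ann
  have P3 : LNegative Lt Ann → MaxLNegative Lt Ann := by
    intro hn
    refine ⟨hn, ?_⟩
    intro S hS hsub
    apply Set.Subset.antisymm _ hsub
    intro s hs
    obtain ⟨x, rfl⟩ := hsurj s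
    -- apply core18 with -L and C
    have hiso' : ∀ b : B, ‖(-L) b‖ = ‖b‖ := by
      intro b
      rw [ContinuousLinearMap.neg_apply, norm_neg]
      exact hiso b
    have hsym' : ∀ b c : B, (-L) c b = (-L) b c := by
      intro b c
      simp only [ContinuousLinearMap.neg_apply]
      rw [hsym b c]
    have hsurj' : Function.Surjective (-L : B →L[ℝ] StrongDual ℝ B) := by
      intro p
      obtain ⟨x, hx⟩ := hsurj (-p)
      exact ⟨x, by rw [ContinuousLinearMap.neg_apply, hx, neg_neg]⟩
    have hposC : ∀ y ∈ C, 0 ≤ (-L) y y := by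
      intro y hy
      have h := hnegC hn y hy
      simp only [ContinuousLinearMap.neg_apply]
      linarith
    have hnegC' : ∀ e : B, (∀ y ∈ C, (-L) e y = 0) → (-L) e e ≤ 0 := by
      intro e hce
      have h1 : ∀ y ∈ C, L e y = 0 := by
        intro y hy
        have := hce y hy
        simp only [ContinuousLinearMap.neg_apply] at this
        linarith [this]
      have h2 : e ∈ A := hCperp e h1
      have h3 := hposL e h2
      simp only [ContinuousLinearMap.neg_apply]
      linarith
    have hxC : x ∈ C := by
      apply core18 (-L) hiso' hsym' hsurj' C hCclosed hposC hnegC'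
      intro y hy
      have h1 := hS.2 (L x) hs (L y) (hsub ((hmemAnn y).mpr hy))
      have h2 : L x - L y = L (x - y) := (map_sub L x y).symm
      rw [h2, hqt (x - y)] at h1
      unfold qL at h1
      simp only [ContinuousLinearMap.neg_apply]
      linarith
    exact (hmemAnn x).mpr hxC
  exact ⟨⟨P1, P2⟩, ⟨fun h => P3 (P1 h), fun h => P2 h.1⟩⟩
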